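/- Let a ∈ B^n be a crossingless matching containing the pair (i, i+1), and let a' ∈ B^{n−1} be the crossingless matching obtained from a by removing the pair (i, i+1) and renumbering each j ≥ i+2 to j−2. Then K_a = q_{2n,i}^{−1}(K_{a'}) as subsets of X_{2n,i}; in particular K_a ⊆ X_{2n,i}. -/

import Mathlib

open scoped ComplexInnerProductSpace

noncomputable section

abbrev E (N : ℕ) := EuclideanSpace ℂ (Fin N ⊕ Fin N)

def zmap (N : ℕ) : E N →ₗ[ℂ] E N where
  toFun v := WithLp.toLp 2 fun i =>
    match i with
    | Sum.inl j => if h : (j : ℕ) + 1 < N then v (Sum.inl ⟨(j : ℕ) + 1, h⟩) else 0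
    | Sum.inr j => if h : (j : ℕ) + 1 < N then v (Sum.inr ⟨(j : ℕ) + 1, h⟩) else 0
  map_add' u v := by
    ext i
    rcases i with j | j <;> simp only [PiLp.add_apply, PiLp.toLp_apply] <;> split <;> simp
  map_smul' c v := by
    ext i
    rcases i with j | j <;> simp only [PiLp.smul_apply, PiLp.toLp_apply, RingHom.id_apply, smul_eq_mul] <;>
      split <;> simp

def Cmap (N : ℕ) : E N →ₗ[ℂ] EuclideanSpace ℂ (Fin 2) where
  toFun v := WithLp.toLp 2 fun i => if i = 0 then ∑ j : Fin N, v (Sum.inl j) else ∑ j : Fin N, v (Sum.inr j)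
  map_add' u v := by
    ext i
    by_cases h : i = (0 : Fin 2) <;> simp [h, PiLp.add_apply, Finset.sum_add_distrib]
  map_smul' c v := by
    ext i
    by_cases h : i = (0 : Fin 2) <;> simp [h, PiLp.smul_apply, Finset.mul_sum]

/-- `Ym N m` : complete flags `0 = L_0 ⊊ L_1 ⊊ … ⊊ L_m` of `z`-stable subspaces of `E`
with `dim L_j = j`.  A tuple `(L_1,…,L_m) ∈ Y_m` is encoded as the function
`L : Fin (m+1) → Submodule ℂ (E N)` with the convention `L 0 = 0`. -/
def Ym (N m : ℕ) : Set (Fin (m + 1) → Submodule ℂ (E N)) :=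
  {L | L 0 = ⊥ ∧ StrictMono L ∧ (∀ j : Fin (m + 1), Module.finrank ℂ (L j) = (j : ℕ)) ∧
    ∀ j : Fin (m + 1), (L j).map (zmap N) ≤ L j}

/-- The map `φ_m`, in coordinates: `φ_m(L)_j = C(L_{j+1} ∩ L_j^⊥)` (0-based `j`),
i.e. the tuple `(C(L_1), C(L_2 ∩ L_1^⊥), …, C(L_m ∩ L_{m-1}^⊥))`. -/
def phiRaw (N m : ℕ) (L : Fin (m + 1) → Submodule ℂ (E N)) :
    Fin m → Submodule ℂ (EuclideanSpace ℂ (Fin 2)) :=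
  fun j => ((L j.succ) ⊓ (L j.castSucc)ᗮ).map (Cmap N)

/-- `X_{m,i} = {(L_1,…,L_m) ∈ Y_m : L_{i+1} = z^{-1}(L_{i-1})}` (with `L_0 = 0`). -/
def Xmi (N m i : ℕ) : Set (Fin (m + 1) → Submodule ℂ (E N)) :=
  {L | L ∈ Ym N m ∧ ∀ (h : i + 1 < m + 1) (h' : i - 1 < m + 1),
    L ⟨i + 1, h⟩ = (L ⟨i - 1, h'⟩).comap (zmap N)}

/-- `A_{m,i} = {(l_1,…,l_m) ∈ (ℙ¹)^m : l_{i+1} = l_i^⊥}`; a point of `(ℙ¹)^m` is encoded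
as a tuple of rank-one subspaces of `ℂ²`, the line `l_k` sitting at 0-based index `k-1`. -/
def Ami (m i : ℕ) : Set (Fin m → Submodule ℂ (EuclideanSpace ℂ (Fin 2))) :=
  {l | (∀ j, Module.finrank ℂ (l j) = 1) ∧
    ∀ (h : i < m) (h' : i - 1 < m), l ⟨i, h⟩ = (l ⟨i - 1, h'⟩)ᗮ}

/-- `q_{m,i}(L_1,…,L_m) = (L_1,…,L_{i-1}, zL_{i+2},…,zL_m)`. -/
def qRaw (N m i : ℕ) (hm : 2 ≤ m) (L : Fin (m + 1) → Submodule ℂ (E N)) :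
    Fin (m - 2 + 1) → Submodule ℂ (E N) :=
  fun j =>
    if (j : ℕ) < i then L ⟨(j : ℕ), by have := j.isLt; omega⟩
    else (L ⟨(j : ℕ) + 2, by have := j.isLt; omega⟩).map (zmap N)

/-- The forgetful map `g_{m,i}(l_1,…,l_m) = (l_1,…,l_{i-1}, l_{i+2},…,l_m)`. -/
def gRaw (m i : ℕ) (l : Fin m → Submodule ℂ (EuclideanSpace ℂ (Fin 2))) :
    Fin (m - 2) → Submodule ℂ (EuclideanSpace ℂ (Fin 2)) :=
  fun k =>
    if (k : ℕ) + 1 < i then l ⟨(k : ℕ), by have := k.isLt; omega⟩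
    else l ⟨(k : ℕ) + 2, by have := k.isLt; omega⟩

/-- The involution `I_{2n}` of `(ℙ¹)^m`: `l_j ↦ l_j` for `j` odd, `l_j ↦ l_j^⊥` for `j` even
(the line `l_j` sits at 0-based index `j-1`). -/
def Imap (m : ℕ) (l : Fin m → Submodule ℂ (EuclideanSpace ℂ (Fin 2))) :
    Fin m → Submodule ℂ (EuclideanSpace ℂ (Fin 2)) :=
  fun k => if (k : ℕ) % 2 = 0 then l k else (l k)ᗮ

/-- A crossingless matching of the `2n` points `{1,…,2n}`: a partition of `{1,…,2n}` into
`n` pairs (each pair recorded as `(i,j)` with `i < j`) such that there is no quadruple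
`i < j < k < l` with `(i,k)` and `(j,l)` paired. -/
structure CrossinglessMatching (n : ℕ) where
  pairs : Finset (ℕ × ℕ)
  card_eq : pairs.card = n
  lt : ∀ p ∈ pairs, p.1 < p.2
  mem_range : ∀ p ∈ pairs, 1 ≤ p.1 ∧ p.2 ≤ 2 * n
  cover : ∀ k, 1 ≤ k → k ≤ 2 * n → ∃! p, p ∈ pairs ∧ (p.1 = k ∨ p.2 = k)
  noncross : ∀ i j k l : ℕ, i < j → j < k → k < l → (i, k) ∈ pairs → (j, l) ∉ pairs

/-- `{(L_1,…,L_m) ∈ Y_m : L_{s_a(j)} = z^{-d_a(j)} L_{j-1} for all j ∈ O_a}`, where for a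
pair `(i,j)` of the matching, `s_a(i) = j`, `d_a(i) = (j-i+1)/2`, and `z^{-d}` is the
`d`-fold preimage under `z`. -/
def KaSet (N m : ℕ) (pairs : Finset (ℕ × ℕ)) : Set (Fin (m + 1) → Submodule ℂ (E N)) :=
  {L | L ∈ Ym N m ∧ ∀ p ∈ pairs,
    L (Fin.ofNat (m + 1) p.2) =
      (L (Fin.ofNat (m + 1) (p.1 - 1 : ℕ))).comap ((zmap N) ^ ((p.2 - p.1 + 1) / 2))}

/-- `S_a = {(l_1,…,l_{2n}) ∈ (ℙ¹)^{2n} : l_{s_a(j)} = l_j ∀ j ∈ O_a}` (0-based indexing, so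
`l_k` sits at index `k-1`). -/
def SaSet (m : ℕ) (pairs : Finset (ℕ × ℕ)) :
    Set (Fin m → Submodule ℂ (EuclideanSpace ℂ (Fin 2))) :=
  {l | (∀ j, Module.finrank ℂ (l j) = 1) ∧
    ∀ p ∈ pairs, ∀ (h2 : p.2 - 1 < m) (h1 : p.1 - 1 < m), l ⟨p.2 - 1, h2⟩ = l ⟨p.1 - 1, h1⟩}

/-- `T_a = {(l_1,…,l_{2n}) ∈ (ℙ¹)^{2n} : l_{s_a(j)} = l_j^⊥ ∀ j ∈ O_a}`. -/
def TaSet (m : ℕ) (pairs : Finset (ℕ × ℕ)) :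
    Set (Fin m → Submodule ℂ (EuclideanSpace ℂ (Fin 2))) :=
  {l | (∀ j, Module.finrank ℂ (l j) = 1) ∧
    ∀ p ∈ pairs, ∀ (h2 : p.2 - 1 < m) (h1 : p.1 - 1 < m), l ⟨p.2 - 1, h2⟩ = (l ⟨p.1 - 1, h1⟩)ᗮ}

namespace KaAux
open Module Submodule LinearMap

lemma zmap_apply_inl (N : ℕ) (v : E N) (j : Fin N) :
    zmap N v (Sum.inl j) = if h : (j : ℕ) + 1 < N then v (Sum.inl ⟨(j : ℕ) + 1, h⟩) else 0 := rfl

lemma zmap_apply_inr (N : ℕ) (v : E N) (j : Fin N) :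
    zmap N v (Sum.inr j) = if h : (j : ℕ) + 1 < N then v (Sum.inr ⟨(j : ℕ) + 1, h⟩) else 0 := rfl

lemma zpow_apply_inl (N d : ℕ) (v : E N) (j : Fin N) :
    ((zmap N ^ d) v) (Sum.inl j) =
      if h : (j : ℕ) + d < N then v (Sum.inl ⟨(j : ℕ) + d, h⟩) else 0 := by
  induction d generalizing v j with
  | zero =>
    rw [pow_zero, Module.End.one_apply, dif_pos (by omega : (j : ℕ) + 0 < N)]
    exact congrArg (fun t => v (Sum.inl t)) (Fin.ext (by show (j:ℕ) = (j:ℕ) + 0; omega))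
  | succ d ih =>
    rw [pow_succ, Module.End.mul_apply, ih]
    by_cases h1 : (j : ℕ) + d < N
    · rw [dif_pos h1, zmap_apply_inl]
      by_cases h2 : (j : ℕ) + d + 1 < N
      · rw [dif_pos h2, dif_pos (by omega : (j : ℕ) + (d+1) < N)]
        exact congrArg (fun t => v (Sum.inl t)) (Fin.ext (by show (j:ℕ)+d+1 = (j:ℕ)+(d+1); omega))
      · rw [dif_neg h2, dif_neg (by omega : ¬ ((j : ℕ) + (d+1) < N))]
    · rw [dif_neg h1, dif_neg (by omega : ¬ ((j : ℕ) + (d+1) < N))]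

lemma zpow_apply_inr (N d : ℕ) (v : E N) (j : Fin N) :
    ((zmap N ^ d) v) (Sum.inr j) =
      if h : (j : ℕ) + d < N then v (Sum.inr ⟨(j : ℕ) + d, h⟩) else 0 := by
  induction d generalizing v j with
  | zero =>
    rw [pow_zero, Module.End.one_apply, dif_pos (by omega : (j : ℕ) + 0 < N)]
    exact congrArg (fun t => v (Sum.inr t)) (Fin.ext (by show (j:ℕ) = (j:ℕ) + 0; omega))
  | succ d ih =>
    rw [pow_succ, Module.End.mul_apply, ih]
    by_cases h1 : (j : ℕ) + d < N
    · rw [dif_pos h1, zmap_apply_inr]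
      by_cases h2 : (j : ℕ) + d + 1 < N
      · rw [dif_pos h2, dif_pos (by omega : (j : ℕ) + (d+1) < N)]
        exact congrArg (fun t => v (Sum.inr t)) (Fin.ext (by show (j:ℕ)+d+1 = (j:ℕ)+(d+1); omega))
      · rw [dif_neg h2, dif_neg (by omega : ¬ ((j : ℕ) + (d+1) < N))]
    · rw [dif_neg h1, dif_neg (by omega : ¬ ((j : ℕ) + (d+1) < N))]

lemma mem_ker_zpow_iff (N d : ℕ) (v : E N) :
    v ∈ LinearMap.ker (zmap N ^ d) ↔
      ∀ j : Fin N, d ≤ (j : ℕ) → v (Sum.inl j) = 0 ∧ v (Sum.inr j) = 0 := by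
  rw [LinearMap.mem_ker]
  constructor
  · intro h j hj
    have hlt : (j : ℕ) - d < N := by omega
    constructor
    · have h0 : ((zmap N ^ d) v) (Sum.inl ⟨(j : ℕ) - d, hlt⟩) = 0 := by rw [h]; rfl
      rw [zpow_apply_inl, dif_pos (by omega : (j : ℕ) - d + d < N)] at h0
      rwa [show (⟨(j:ℕ) - d + d, by omega⟩ : Fin N) = j from Fin.ext (by show (j:ℕ) - d + d = (j:ℕ); omega)] at h0
    · have h0 : ((zmap N ^ d) v) (Sum.inr ⟨(j : ℕ) - d, hlt⟩) = 0 := by rw [h]; rfl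
      rw [zpow_apply_inr, dif_pos (by omega : (j : ℕ) - d + d < N)] at h0
      rwa [show (⟨(j:ℕ) - d + d, by omega⟩ : Fin N) = j from Fin.ext (by show (j:ℕ) - d + d = (j:ℕ); omega)] at h0
  · intro hv
    ext k
    rcases k with j | j
    · rw [zpow_apply_inl]
      by_cases h : (j : ℕ) + d < N
      · rw [dif_pos h]
        exact (hv ⟨(j:ℕ) + d, h⟩ (by show d ≤ (j:ℕ) + d; omega)).1
      · rw [dif_neg h]; rfl
    · rw [zpow_apply_inr]
      by_cases h : (j : ℕ) + d < N
      · rw [dif_pos h]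
        exact (hv ⟨(j:ℕ) + d, h⟩ (by show d ≤ (j:ℕ) + d; omega)).2
      · rw [dif_neg h]; rfl

end KaAux
namespace KaAux
open Module Submodule LinearMap

lemma finrank_ker_zpow (N d : ℕ) (hdN : d ≤ N) :
    Module.finrank ℂ (LinearMap.ker (zmap N ^ d)) = 2 * d := by
  let Φ : LinearMap.ker (zmap N ^ d) →ₗ[ℂ] ((Fin d ⊕ Fin d) → ℂ) :=
    { toFun := fun v => fun k => match k with
        | Sum.inl k => (v : E N) (Sum.inl (Fin.castLE hdN k))
        | Sum.inr k => (v : E N) (Sum.inr (Fin.castLE hdN k))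
      map_add' := by intro u v; funext k; rcases k with k | k <;> rfl
      map_smul' := by intro c v; funext k; rcases k with k | k <;> rfl }
  have hinj : Function.Injective Φ := by
    intro u v huv
    apply Subtype.ext
    ext k
    rcases k with j | j
    · by_cases hj : (j : ℕ) < d
      · have := congrFun huv (Sum.inl ⟨(j : ℕ), hj⟩)
        simpa [Φ, show Fin.castLE hdN ⟨(j:ℕ), hj⟩ = j from Fin.ext rfl] using this
      · have hu := ((mem_ker_zpow_iff N d _).mp u.2 j (by omega)).1
        have hv := ((mem_ker_zpow_iff N d _).mp v.2 j (by omega)).1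
        rw [hu, hv]
    · by_cases hj : (j : ℕ) < d
      · have := congrFun huv (Sum.inr ⟨(j : ℕ), hj⟩)
        simpa [Φ, show Fin.castLE hdN ⟨(j:ℕ), hj⟩ = j from Fin.ext rfl] using this
      · have hu := ((mem_ker_zpow_iff N d _).mp u.2 j (by omega)).2
        have hv := ((mem_ker_zpow_iff N d _).mp v.2 j (by omega)).2
        rw [hu, hv]
  have hsurj : Function.Surjective Φ := by
    intro f
    refine ⟨⟨(WithLp.toLp 2 (fun i => match i with
      | Sum.inl j => if h : (j : ℕ) < d then f (Sum.inl ⟨(j:ℕ), h⟩) else 0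
      | Sum.inr j => if h : (j : ℕ) < d then f (Sum.inr ⟨(j:ℕ), h⟩) else 0) : E N), ?_⟩, ?_⟩
    · rw [mem_ker_zpow_iff]
      intro j hj
      constructor
      · show (if h : (j : ℕ) < d then f (Sum.inl ⟨(j:ℕ), h⟩) else 0) = 0
        rw [dif_neg (by omega)]
      · show (if h : (j : ℕ) < d then f (Sum.inr ⟨(j:ℕ), h⟩) else 0) = 0
        rw [dif_neg (by omega)]
    · funext k
      rcases k with k | k
      · show (if h : ((Fin.castLE hdN k : Fin N) : ℕ) < d then f (Sum.inl ⟨_, h⟩) else 0) = f (Sum.inl k)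
        rw [dif_pos (show ((Fin.castLE hdN k : Fin N) : ℕ) < d from k.isLt)]
        exact congrArg (fun t => f (Sum.inl t)) (Fin.ext rfl)
      · show (if h : ((Fin.castLE hdN k : Fin N) : ℕ) < d then f (Sum.inr ⟨_, h⟩) else 0) = f (Sum.inr k)
        rw [dif_pos (show ((Fin.castLE hdN k : Fin N) : ℕ) < d from k.isLt)]
        exact congrArg (fun t => f (Sum.inr t)) (Fin.ext rfl)
  have e := LinearEquiv.ofBijective Φ ⟨hinj, hsurj⟩
  rw [e.finrank_eq, Module.finrank_fintype_fun_eq_card]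
  simp [Fintype.card_sum]
  omega

lemma finrank_ker_z (N : ℕ) (hN : 1 ≤ N) :
    Module.finrank ℂ (LinearMap.ker (zmap N)) = 2 := by
  have := finrank_ker_zpow N 1 hN
  rwa [pow_one] at this

lemma finrank_map_add (N : ℕ) (f : E N →ₗ[ℂ] E N) (V : Submodule ℂ (E N)) :
    Module.finrank ℂ (V.map f) + Module.finrank ℂ (LinearMap.ker f ⊓ V : Submodule ℂ (E N)) =
      Module.finrank ℂ V := by
  have h := LinearMap.finrank_range_add_finrank_ker (f.comp V.subtype)
  rw [LinearMap.range_comp, Submodule.range_subtype, LinearMap.ker_comp] at h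
  have e : Submodule.comap V.subtype (LinearMap.ker f) =
      Submodule.comap V.subtype (LinearMap.ker f ⊓ V) := by
    ext x; simp [x.2]
  rw [e, (Submodule.comapSubtypeEquivOfLe (inf_le_right : LinearMap.ker f ⊓ V ≤ V)).finrank_eq] at h
  exact h

lemma finrank_comap (N : ℕ) (f : E N →ₗ[ℂ] E N) (U : Submodule ℂ (E N)) :
    Module.finrank ℂ (U.comap f) =
      Module.finrank ℂ (LinearMap.range f ⊓ U : Submodule ℂ (E N)) +
        Module.finrank ℂ (LinearMap.ker f) := by
  have h := LinearMap.finrank_range_add_finrank_ker (f.comp (U.comap f).subtype)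
  rw [LinearMap.range_comp, Submodule.range_subtype, Submodule.map_comap_eq,
    LinearMap.ker_comp] at h
  have hker : LinearMap.ker f ≤ U.comap f := by
    intro x hx
    simp only [Submodule.mem_comap, LinearMap.mem_ker.mp hx]
    exact Submodule.zero_mem U
  have e : Submodule.comap (U.comap f).subtype (LinearMap.ker f) =
      Submodule.comap (U.comap f).subtype (LinearMap.ker f ⊓ U.comap f) := by
    ext x; simp [x.2]
  rw [e, (Submodule.comapSubtypeEquivOfLe
    (inf_le_right : LinearMap.ker f ⊓ U.comap f ≤ U.comap f)).finrank_eq,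
    inf_eq_left.mpr hker] at h
  exact h.symm

lemma finrank_comap_zpow_le (N d : ℕ) (hdN : d ≤ N) (U : Submodule ℂ (E N)) :
    Module.finrank ℂ (U.comap (zmap N ^ d)) ≤ Module.finrank ℂ U + 2 * d := by
  rw [finrank_comap, finrank_ker_zpow N d hdN]
  have h1 : Module.finrank ℂ (LinearMap.range (zmap N ^ d) ⊓ U : Submodule ℂ (E N)) ≤
      Module.finrank ℂ U := Submodule.finrank_mono inf_le_right
  omega

lemma finrank_map_of_ker_le (N : ℕ) (hN : 1 ≤ N) (V : Submodule ℂ (E N))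
    (hk : LinearMap.ker (zmap N) ≤ V) :
    Module.finrank ℂ (V.map (zmap N)) + 2 = Module.finrank ℂ V := by
  have h := finrank_map_add N (zmap N) V
  rwa [inf_eq_left.mpr hk, finrank_ker_z N hN] at h

end KaAux
namespace KaAux
open Module Submodule LinearMap

lemma pow_pred_mul (N d : ℕ) (hd : 1 ≤ d) :
    (zmap N ^ (d - 1)).comp (zmap N) = zmap N ^ d := by
  rw [← Module.End.mul_eq_comp, ← pow_succ]
  congr 1
  omega

lemma zpow_comm_apply (N d : ℕ) (x : E N) :
    (zmap N ^ d) (zmap N x) = zmap N ((zmap N ^ d) x) := by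
  rw [← Module.End.mul_apply, ← Module.End.mul_apply, pow_mul_comm']

lemma engine1 (N d : ℕ) (hd : 1 ≤ d) (hdN : d ≤ N)
    (V W : Submodule ℂ (E N)) (hV : V = W.comap (zmap N ^ d))
    (hk : LinearMap.ker (zmap N) ≤ V)
    (hfin : Module.finrank ℂ W + 2 * d ≤ Module.finrank ℂ V) :
    V.map (zmap N) = W.comap (zmap N ^ (d - 1)) := by
  have hle : V.map (zmap N) ≤ W.comap (zmap N ^ (d - 1)) := by
    rw [Submodule.map_le_iff_le_comap, ← Submodule.comap_comp, pow_pred_mul N d hd]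
    exact hV.le
  have h2 := finrank_map_of_ker_le N (by omega) V hk
  have h3 := finrank_comap_zpow_le N (d - 1) (by omega) W
  exact Submodule.eq_of_le_of_finrank_le hle (by omega)

lemma engine2 (N d : ℕ) (hdN : d ≤ N) (hN : 1 ≤ N)
    (V W : Submodule ℂ (E N)) (hV : V = W.comap (zmap N ^ d))
    (hkV : LinearMap.ker (zmap N) ≤ V) (hkW : LinearMap.ker (zmap N) ≤ W)
    (hfin : Module.finrank ℂ W + 2 * d ≤ Module.finrank ℂ V) :
    V.map (zmap N) = (W.map (zmap N)).comap (zmap N ^ d) := by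
  have hle : V.map (zmap N) ≤ (W.map (zmap N)).comap (zmap N ^ d) := by
    rw [Submodule.map_le_iff_le_comap, ← Submodule.comap_comp]
    intro x hx
    have hx' : (zmap N ^ d) x ∈ W := by rw [hV] at hx; exact hx
    have : ((zmap N ^ d).comp (zmap N)) x = zmap N ((zmap N ^ d) x) := zpow_comm_apply N d x
    rw [Submodule.mem_comap, this]
    exact Submodule.mem_map_of_mem hx'
  have h2 := finrank_map_of_ker_le N hN V hkV
  have h3 := finrank_map_of_ker_le N hN W hkW
  have h4 := finrank_comap_zpow_le N d hdN (W.map (zmap N))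
  exact Submodule.eq_of_le_of_finrank_le hle (by omega)

lemma engine3 (N d : ℕ) (hd : 1 ≤ d) (hdN : d ≤ N)
    (V W : Submodule ℂ (E N)) (h : V.map (zmap N) = W.comap (zmap N ^ (d - 1)))
    (hfin : Module.finrank ℂ W + 2 * d ≤ Module.finrank ℂ V) :
    V = W.comap (zmap N ^ d) := by
  have hle : V ≤ W.comap (zmap N ^ d) := by
    rw [← pow_pred_mul N d hd, Submodule.comap_comp, ← h,
      ← Submodule.map_le_iff_le_comap]
  have h3 := finrank_comap_zpow_le N d hdN W
  exact Submodule.eq_of_le_of_finrank_le hle (by omega)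

lemma engine4 (N d : ℕ) (hdN : d ≤ N)
    (V W : Submodule ℂ (E N)) (h : V.map (zmap N) = (W.map (zmap N)).comap (zmap N ^ d))
    (hkW : LinearMap.ker (zmap N) ≤ W)
    (hfin : Module.finrank ℂ W + 2 * d ≤ Module.finrank ℂ V) :
    V = W.comap (zmap N ^ d) := by
  have hle : V ≤ W.comap (zmap N ^ d) := by
    intro x hx
    have h1 : zmap N x ∈ (W.map (zmap N)).comap (zmap N ^ d) := by
      rw [← h]; exact Submodule.mem_map_of_mem hx
    rw [Submodule.mem_comap] at h1
    rw [zpow_comm_apply] at h1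
    obtain ⟨y, hyW, hy⟩ := h1
    have hker : (zmap N ^ d) x - y ∈ LinearMap.ker (zmap N) := by
      rw [LinearMap.mem_ker, map_sub, hy, sub_self]
    have : (zmap N ^ d) x = ((zmap N ^ d) x - y) + y := by abel
    rw [Submodule.mem_comap, this]
    exact Submodule.add_mem W (hkW hker) hyW
  have h3 := finrank_comap_zpow_le N d hdN W
  exact Submodule.eq_of_le_of_finrank_le hle (by omega)

lemma fin_cast_eq_mk (m k : ℕ) (h : k < m + 1) : Fin.ofNat (m + 1) k = ⟨k, h⟩ :=
  Fin.ext (Nat.mod_eq_of_lt h)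

lemma qRaw_eq_of_lt {N m i : ℕ} (hm : 2 ≤ m) (L : Fin (m + 1) → Submodule ℂ (E N)) {k : ℕ}
    (hk : k < m - 2 + 1) (h : k < i) (hk2 : k < m + 1) :
    qRaw N m i hm L ⟨k, hk⟩ = L ⟨k, hk2⟩ := by
  unfold qRaw
  rw [if_pos h]

lemma qRaw_eq_of_ge {N m i : ℕ} (hm : 2 ≤ m) (L : Fin (m + 1) → Submodule ℂ (E N)) {k l : ℕ}
    (hk : k < m - 2 + 1) (h : ¬ k < i) (hl : k + 2 = l) (hl2 : l < m + 1) :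
    qRaw N m i hm L ⟨k, hk⟩ = (L ⟨l, hl2⟩).map (zmap N) := by
  subst hl
  unfold qRaw
  rw [if_neg h]

end KaAux
theorem Ka_eq_q_preimage (N n i : ℕ) (hn : 2 ≤ n) (hN : 2 * n ≤ N)
    (h1 : 1 ≤ i) (h2 : i ≤ 2 * n - 1)
    (a : CrossinglessMatching n) (hi : (i, i + 1) ∈ a.pairs)
    (a' : CrossinglessMatching (n - 1))
    (ha' : ∀ p : ℕ × ℕ, p ∈ a'.pairs ↔ ∃ q ∈ a.pairs, q ≠ (i, i + 1) ∧
      p.1 = (if i + 2 ≤ q.1 then q.1 - 2 else q.1) ∧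
      p.2 = (if i + 2 ≤ q.2 then q.2 - 2 else q.2)) :
    KaSet N (2 * n) a.pairs =
      {L | L ∈ Xmi N (2 * n) i ∧
        qRaw N (2 * n) i (by omega) L ∈ KaSet N (2 * n - 2) a'.pairs} := by
  have hN1 : 1 ≤ N := by omega
  have huniq : ∀ r ∈ a.pairs, (r.1 = i ∨ r.2 = i ∨ r.1 = i + 1 ∨ r.2 = i + 1) →
      r = (i, i + 1) := by
    intro r hr hcase
    obtain ⟨p1, hp1, hu1⟩ := a.cover i (by omega) (by omega)
    obtain ⟨p2, hp2, hu2⟩ := a.cover (i + 1) (by omega) (by omega)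
    have e1 : (i, i + 1) = p1 := hu1 (i, i + 1) ⟨hi, Or.inl rfl⟩
    have e2 : (i, i + 1) = p2 := hu2 (i, i + 1) ⟨hi, Or.inr rfl⟩
    rcases hcase with h | h | h | h
    · exact (hu1 r ⟨hr, Or.inl h⟩).trans e1.symm
    · exact (hu1 r ⟨hr, Or.inr h⟩).trans e1.symm
    · exact (hu2 r ⟨hr, Or.inl h⟩).trans e2.symm
    · exact (hu2 r ⟨hr, Or.inr h⟩).trans e2.symm
  ext L
  simp only [KaSet, Xmi, Ym, Set.mem_setOf_eq]
  constructor
  · rintro ⟨⟨hY0, hsm, hfr, hst⟩, hp⟩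
    have hfrk : ∀ k (h : k < 2 * n + 1), Module.finrank ℂ (L ⟨k, h⟩) = k :=
      fun k h => hfr ⟨k, h⟩
    have hmonoL : ∀ j k (hj : j < 2 * n + 1) (hk : k < 2 * n + 1), j ≤ k →
        L ⟨j, hj⟩ ≤ L ⟨k, hk⟩ :=
      fun j k hj hk hjk => hsm.monotone (Fin.mk_le_mk.mpr hjk)
    have hii0 : L (Fin.ofNat (2 * n + 1) (i + 1)) =
        (L (Fin.ofNat (2 * n + 1) (i - 1))).comap (zmap N ^ (((i + 1) - i + 1) / 2)) :=
      hp (i, i + 1) hi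
    rw [show ((i + 1) - i + 1) / 2 = 1 by omega, pow_one,
      KaAux.fin_cast_eq_mk (2 * n) (i + 1) (by omega),
      KaAux.fin_cast_eq_mk (2 * n) (i - 1) (by omega)] at hii0
    have hK : LinearMap.ker (zmap N) ≤ L ⟨i + 1, by omega⟩ := by
      rw [hii0]; exact Submodule.comap_mono bot_le
    have hKj : ∀ k (h : k < 2 * n + 1), i + 1 ≤ k → LinearMap.ker (zmap N) ≤ L ⟨k, h⟩ :=
      fun k h hik => le_trans hK (hmonoL _ _ _ _ hik)
    have hmapfr : ∀ k (h : k < 2 * n + 1), i + 1 ≤ k →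
        Module.finrank ℂ ((L ⟨k, h⟩).map (zmap N)) + 2 = k := fun k h hik => by
      rw [KaAux.finrank_map_of_ker_le N hN1 _ (hKj k h hik), hfrk k h]
    have hzi : (L ⟨i + 1, by omega⟩).map (zmap N) = L ⟨i - 1, by omega⟩ := by
      apply Submodule.eq_of_le_of_finrank_le
      · rw [hii0, Submodule.map_comap_eq]; exact inf_le_right
      · have hm1 := hmapfr (i + 1) (by omega) (le_refl _)
        rw [hfrk (i - 1) (by omega)]
        omega
    have hQ0 : qRaw N (2 * n) i (by omega) L 0 = ⊥ := by
      rw [show (0 : Fin (2 * n - 2 + 1)) = ⟨0, by omega⟩ from Fin.ext (by simp)]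
      rw [KaAux.qRaw_eq_of_lt _ L _ (by omega) (by omega)]
      rw [show (⟨0, by omega⟩ : Fin (2 * n + 1)) = 0 from Fin.ext (by simp)]
      exact hY0
    have hQfr : ∀ k (hk : k < 2 * n - 2 + 1),
        Module.finrank ℂ (qRaw N (2 * n) i (by omega) L ⟨k, hk⟩) = k := by
      intro k hk
      by_cases hki : k < i
      · rw [KaAux.qRaw_eq_of_lt _ L _ hki (by omega)]
        exact hfrk k _
      · rw [KaAux.qRaw_eq_of_ge _ L _ hki rfl (by omega)]
        have := hmapfr (k + 2) (by omega) (by omega)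
        omega
    have hQmono : ∀ (j k : ℕ) (hj : j < 2 * n - 2 + 1) (hk : k < 2 * n - 2 + 1), j ≤ k →
        qRaw N (2 * n) i (by omega) L ⟨j, hj⟩ ≤ qRaw N (2 * n) i (by omega) L ⟨k, hk⟩ := by
      intro j k hj hk hjk
      by_cases hji : j < i
      · by_cases hki : k < i
        · rw [KaAux.qRaw_eq_of_lt _ L _ hji (by omega),
            KaAux.qRaw_eq_of_lt _ L _ hki (by omega)]
          exact hmonoL _ _ _ _ hjk
        · rw [KaAux.qRaw_eq_of_lt _ L _ hji (by omega),
            KaAux.qRaw_eq_of_ge _ L _ hki rfl (by omega)]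
          calc L ⟨j, by omega⟩ ≤ L ⟨i - 1, by omega⟩ := hmonoL _ _ _ _ (by omega)
            _ = (L ⟨i + 1, by omega⟩).map (zmap N) := hzi.symm
            _ ≤ (L ⟨k + 2, by omega⟩).map (zmap N) :=
              Submodule.map_mono (hmonoL _ _ _ _ (by omega))
      · have hki : ¬ k < i := by omega
        rw [KaAux.qRaw_eq_of_ge _ L _ hji rfl (by omega),
          KaAux.qRaw_eq_of_ge _ L _ hki rfl (by omega)]
        exact Submodule.map_mono (hmonoL _ _ _ _ (by omega))
    have hQsm : StrictMono (qRaw N (2 * n) i (by omega) L) := by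
      intro u v huv
      obtain ⟨u, hu⟩ := u
      obtain ⟨v, hv⟩ := v
      have hlt : u < v := Fin.mk_lt_mk.mp huv
      refine lt_of_le_of_ne (hQmono u v hu hv hlt.le) ?_
      intro he
      have hfu := hQfr u hu
      rw [he, hQfr v hv] at hfu
      omega
    have hQst : ∀ (j : Fin (2 * n - 2 + 1)),
        (qRaw N (2 * n) i (by omega) L j).map (zmap N) ≤ qRaw N (2 * n) i (by omega) L j := by
      intro j
      obtain ⟨k, hk⟩ := j
      by_cases hki : k < i
      · rw [KaAux.qRaw_eq_of_lt _ L _ hki (by omega)]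
        exact hst ⟨k, by omega⟩
      · rw [KaAux.qRaw_eq_of_ge _ L _ hki rfl (by omega)]
        exact Submodule.map_mono (hst ⟨k + 2, by omega⟩)
    refine ⟨⟨⟨hY0, hsm, hfr, hst⟩, fun h h' => hii0⟩,
      ⟨hQ0, hQsm, fun j => hQfr j.1 j.2, hQst⟩, ?_⟩
    intro p' hp'
    obtain ⟨q, hq, hne, hp1, hp2⟩ := (ha' p').mp hp'
    have hqlt := a.lt q hq
    have hqr := a.mem_range q hq
    have hne1 : q.1 ≠ i := fun h => hne (huniq q hq (Or.inl h))
    have hne2 : q.2 ≠ i := fun h => hne (huniq q hq (Or.inr (Or.inl h)))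
    have hne3 : q.1 ≠ i + 1 := fun h => hne (huniq q hq (Or.inr (Or.inr (Or.inl h))))
    have hne4 : q.2 ≠ i + 1 := fun h => hne (huniq q hq (Or.inr (Or.inr (Or.inr h))))
    have hPq : L (Fin.ofNat (2 * n + 1) (q.2)) =
        (L (Fin.ofNat (2 * n + 1) (q.1 - 1))).comap (zmap N ^ ((q.2 - q.1 + 1) / 2)) :=
      hp q hq
    rw [KaAux.fin_cast_eq_mk (2 * n) q.2 (by omega),
      KaAux.fin_cast_eq_mk (2 * n) (q.1 - 1) (by omega)] at hPq
    rcases show q.2 < i ∨ (q.1 < i ∧ i + 1 < q.2) ∨ i + 1 < q.1 by omega with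
      hA | ⟨hB1, hB2⟩ | hC
    · rw [hp1, hp2, if_neg (show ¬ i + 2 ≤ q.1 by omega),
        if_neg (show ¬ i + 2 ≤ q.2 by omega),
        KaAux.fin_cast_eq_mk (2 * n - 2) q.2 (by omega),
        KaAux.fin_cast_eq_mk (2 * n - 2) (q.1 - 1) (by omega),
        KaAux.qRaw_eq_of_lt _ L _ (show q.2 < i from hA) (by omega),
        KaAux.qRaw_eq_of_lt _ L _ (show q.1 - 1 < i by omega) (by omega)]
      exact hPq
    · rw [hp1, hp2, if_neg (show ¬ i + 2 ≤ q.1 by omega),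
        if_pos (show i + 2 ≤ q.2 by omega),
        KaAux.fin_cast_eq_mk (2 * n - 2) (q.2 - 2) (by omega),
        KaAux.fin_cast_eq_mk (2 * n - 2) (q.1 - 1) (by omega),
        KaAux.qRaw_eq_of_ge _ L _ (show ¬ q.2 - 2 < i by omega)
          (show q.2 - 2 + 2 = q.2 by omega) (by omega),
        KaAux.qRaw_eq_of_lt _ L _ (show q.1 - 1 < i by omega) (by omega),
        show (q.2 - 2 - q.1 + 1) / 2 = (q.2 - q.1 + 1) / 2 - 1 by omega]
      exact KaAux.engine1 N ((q.2 - q.1 + 1) / 2) (by omega) (by omega) _ _ hPq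
        (hKj q.2 (by omega) (by omega)) (by rw [hfrk, hfrk]; omega)
    · rw [hp1, hp2, if_pos (show i + 2 ≤ q.1 by omega),
        if_pos (show i + 2 ≤ q.2 by omega),
        KaAux.fin_cast_eq_mk (2 * n - 2) (q.2 - 2) (by omega),
        KaAux.fin_cast_eq_mk (2 * n - 2) (q.1 - 2 - 1) (by omega),
        KaAux.qRaw_eq_of_ge _ L _ (show ¬ q.2 - 2 < i by omega)
          (show q.2 - 2 + 2 = q.2 by omega) (by omega),
        show (q.2 - 2 - (q.1 - 2) + 1) / 2 = (q.2 - q.1 + 1) / 2 by omega]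
      by_cases hc : q.1 - 2 - 1 < i
      · rw [KaAux.qRaw_eq_of_lt _ L _ hc (by omega),
          show (⟨q.1 - 2 - 1, by omega⟩ : Fin (2 * n + 1)) = ⟨i - 1, by omega⟩ from
            Fin.ext (by show q.1 - 2 - 1 = i - 1; omega), ← hzi]
        rw [show (⟨q.1 - 1, by omega⟩ : Fin (2 * n + 1)) = ⟨i + 1, by omega⟩ from
          Fin.ext (by show q.1 - 1 = i + 1; omega)] at hPq
        exact KaAux.engine2 N ((q.2 - q.1 + 1) / 2) (by omega) hN1 _ _ hPq
          (hKj q.2 (by omega) (by omega)) hK (by rw [hfrk, hfrk]; omega)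
      · rw [KaAux.qRaw_eq_of_ge _ L _ hc (show q.1 - 2 - 1 + 2 = q.1 - 1 by omega) (by omega)]
        exact KaAux.engine2 N ((q.2 - q.1 + 1) / 2) (by omega) hN1 _ _ hPq
          (hKj q.2 (by omega) (by omega)) (hKj (q.1 - 1) (by omega) (by omega))
          (by rw [hfrk, hfrk]; omega)
  · rintro ⟨⟨⟨hY0, hsm, hfr, hst⟩, hX⟩, hY', hp'⟩
    have hfrk : ∀ k (h : k < 2 * n + 1), Module.finrank ℂ (L ⟨k, h⟩) = k :=
      fun k h => hfr ⟨k, h⟩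
    have hmonoL : ∀ j k (hj : j < 2 * n + 1) (hk : k < 2 * n + 1), j ≤ k →
        L ⟨j, hj⟩ ≤ L ⟨k, hk⟩ :=
      fun j k hj hk hjk => hsm.monotone (Fin.mk_le_mk.mpr hjk)
    have hii0 : L ⟨i + 1, by omega⟩ = (L ⟨i - 1, by omega⟩).comap (zmap N) :=
      hX (by omega) (by omega)
    have hK : LinearMap.ker (zmap N) ≤ L ⟨i + 1, by omega⟩ := by
      rw [hii0]; exact Submodule.comap_mono bot_le
    have hKj : ∀ k (h : k < 2 * n + 1), i + 1 ≤ k → LinearMap.ker (zmap N) ≤ L ⟨k, h⟩ :=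
      fun k h hik => le_trans hK (hmonoL _ _ _ _ hik)
    have hmapfr : ∀ k (h : k < 2 * n + 1), i + 1 ≤ k →
        Module.finrank ℂ ((L ⟨k, h⟩).map (zmap N)) + 2 = k := fun k h hik => by
      rw [KaAux.finrank_map_of_ker_le N hN1 _ (hKj k h hik), hfrk k h]
    have hzi : (L ⟨i + 1, by omega⟩).map (zmap N) = L ⟨i - 1, by omega⟩ := by
      apply Submodule.eq_of_le_of_finrank_le
      · rw [hii0, Submodule.map_comap_eq]; exact inf_le_right
      · have hm1 := hmapfr (i + 1) (by omega) (le_refl _)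
        rw [hfrk (i - 1) (by omega)]
        omega
    refine ⟨⟨hY0, hsm, hfr, hst⟩, ?_⟩
    intro q hq
    by_cases hqe : q = (i, i + 1)
    · subst hqe
      show L (Fin.ofNat (2 * n + 1) (i + 1)) =
        (L (Fin.ofNat (2 * n + 1) (i - 1))).comap (zmap N ^ (((i + 1) - i + 1) / 2))
      rw [show ((i + 1) - i + 1) / 2 = 1 by omega, pow_one,
        KaAux.fin_cast_eq_mk (2 * n) (i + 1) (by omega),
        KaAux.fin_cast_eq_mk (2 * n) (i - 1) (by omega)]
      exact hii0
    · have hqlt := a.lt q hq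
      have hqr := a.mem_range q hq
      have hne1 : q.1 ≠ i := fun h => hqe (huniq q hq (Or.inl h))
      have hne2 : q.2 ≠ i := fun h => hqe (huniq q hq (Or.inr (Or.inl h)))
      have hne3 : q.1 ≠ i + 1 := fun h => hqe (huniq q hq (Or.inr (Or.inr (Or.inl h))))
      have hne4 : q.2 ≠ i + 1 := fun h => hqe (huniq q hq (Or.inr (Or.inr (Or.inr h))))
      rw [KaAux.fin_cast_eq_mk (2 * n) q.2 (by omega),
        KaAux.fin_cast_eq_mk (2 * n) (q.1 - 1) (by omega)]
      rcases show q.2 < i ∨ (q.1 < i ∧ i + 1 < q.2) ∨ i + 1 < q.1 by omega with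
        hA | ⟨hB1, hB2⟩ | hC
      · have hp'q : qRaw N (2 * n) i (by omega) L (Fin.ofNat (2 * n - 2 + 1) (q.2)) =
            (qRaw N (2 * n) i (by omega) L (Fin.ofNat (2 * n - 2 + 1) (q.1 - 1))).comap
              (zmap N ^ ((q.2 - q.1 + 1) / 2)) :=
          hp' q ((ha' q).mpr ⟨q, hq, hqe, by rw [if_neg (show ¬ i + 2 ≤ q.1 by omega)],
            by rw [if_neg (show ¬ i + 2 ≤ q.2 by omega)]⟩)
        rw [KaAux.fin_cast_eq_mk (2 * n - 2) q.2 (by omega),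
          KaAux.fin_cast_eq_mk (2 * n - 2) (q.1 - 1) (by omega),
          KaAux.qRaw_eq_of_lt _ L _ (show q.2 < i from hA) (by omega),
          KaAux.qRaw_eq_of_lt _ L _ (show q.1 - 1 < i by omega) (by omega)] at hp'q
        exact hp'q
      · have hp'q : qRaw N (2 * n) i (by omega) L (Fin.ofNat (2 * n - 2 + 1) (q.2 - 2)) =
            (qRaw N (2 * n) i (by omega) L (Fin.ofNat (2 * n - 2 + 1) (q.1 - 1))).comap
              (zmap N ^ ((q.2 - 2 - q.1 + 1) / 2)) :=
          hp' (q.1, q.2 - 2) ((ha' (q.1, q.2 - 2)).mpr ⟨q, hq, hqe,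
            by show q.1 = _; rw [if_neg (show ¬ i + 2 ≤ q.1 by omega)],
            by show q.2 - 2 = _; rw [if_pos (show i + 2 ≤ q.2 by omega)]⟩)
        rw [KaAux.fin_cast_eq_mk (2 * n - 2) (q.2 - 2) (by omega),
          KaAux.fin_cast_eq_mk (2 * n - 2) (q.1 - 1) (by omega),
          KaAux.qRaw_eq_of_ge _ L _ (show ¬ q.2 - 2 < i by omega)
            (show q.2 - 2 + 2 = q.2 by omega) (by omega),
          KaAux.qRaw_eq_of_lt _ L _ (show q.1 - 1 < i by omega) (by omega),
          show (q.2 - 2 - q.1 + 1) / 2 = (q.2 - q.1 + 1) / 2 - 1 by omega] at hp'q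
        exact KaAux.engine3 N ((q.2 - q.1 + 1) / 2) (by omega) (by omega) _ _ hp'q
          (by rw [hfrk, hfrk]; omega)
      · have hp'q : qRaw N (2 * n) i (by omega) L (Fin.ofNat (2 * n - 2 + 1) (q.2 - 2)) =
            (qRaw N (2 * n) i (by omega) L (Fin.ofNat (2 * n - 2 + 1) (q.1 - 2 - 1))).comap
              (zmap N ^ ((q.2 - 2 - (q.1 - 2) + 1) / 2)) :=
          hp' (q.1 - 2, q.2 - 2) ((ha' (q.1 - 2, q.2 - 2)).mpr ⟨q, hq, hqe,
            by show q.1 - 2 = _; rw [if_pos (show i + 2 ≤ q.1 by omega)],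
            by show q.2 - 2 = _; rw [if_pos (show i + 2 ≤ q.2 by omega)]⟩)
        rw [KaAux.fin_cast_eq_mk (2 * n - 2) (q.2 - 2) (by omega),
          KaAux.fin_cast_eq_mk (2 * n - 2) (q.1 - 2 - 1) (by omega),
          KaAux.qRaw_eq_of_ge _ L _ (show ¬ q.2 - 2 < i by omega)
            (show q.2 - 2 + 2 = q.2 by omega) (by omega),
          show (q.2 - 2 - (q.1 - 2) + 1) / 2 = (q.2 - q.1 + 1) / 2 by omega] at hp'q
        by_cases hc : q.1 - 2 - 1 < i
        · rw [KaAux.qRaw_eq_of_lt _ L _ hc (by omega),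
            show (⟨q.1 - 2 - 1, by omega⟩ : Fin (2 * n + 1)) = ⟨i - 1, by omega⟩ from
              Fin.ext (by show q.1 - 2 - 1 = i - 1; omega), ← hzi] at hp'q
          have hEq := KaAux.engine4 N ((q.2 - q.1 + 1) / 2) (by omega) _ _ hp'q hK
            (by rw [hfrk, hfrk]; omega)
          rw [show (⟨i + 1, by omega⟩ : Fin (2 * n + 1)) = ⟨q.1 - 1, by omega⟩ from
            Fin.ext (by show i + 1 = q.1 - 1; omega)] at hEq
          exact hEq
        · rw [KaAux.qRaw_eq_of_ge _ L _ hc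
            (show q.1 - 2 - 1 + 2 = q.1 - 1 by omega) (by omega)] at hp'q
          exact KaAux.engine4 N ((q.2 - q.1 + 1) / 2) (by omega) _ _ hp'q
            (hKj (q.1 - 1) (by omega) (by omega)) (by rw [hfrk, hfrk]; omega)
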